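/- There exists a closed set B ⊆ ℝ² with dimH B = 0 such that for every p ∈ ℝ² there exists a nonzero vector v ∈ ℝ² with p + v, p − v, p + v⊥, and p − v⊥ all belonging to B, where v⊥ := (−v₂, v₁) denotes the rotation of v by 90 degrees; in other words, B contains the four vertices of a (possibly rotated) square centered at every point of ℝ². -/

import Mathlib

noncomputable section

open Set Filter MeasureTheory
open scoped ENNReal NNReal

namespace Sq

/-- The scale exponents. -/
def E (k : ℕ) : ℕ := (k+1).factorial

/-- The scales. -/
def D (k : ℕ) : ℝ := (1/2 : ℝ) ^ E k

lemma E_succ (k : ℕ) : E (k+1) = (k+2) * E k := Nat.factorial_succ _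

lemma E_ge (k : ℕ) : k + 1 ≤ E k := Nat.self_le_factorial _

lemma E_pos (k : ℕ) : 0 < E k := Nat.factorial_pos _

lemma E_lt_succ (k : ℕ) : E k + 1 ≤ E (k+1) := by
  have h := E_succ k
  have h2 : 2 * E k ≤ (k+2) * E k := Nat.mul_le_mul_right _ (by omega)
  have := E_pos k
  omega

lemma E_add_le (n m : ℕ) : E n + m ≤ E (n + m) := by
  induction m with
  | zero => simp
  | succ m ih =>
    have h1 := E_lt_succ (n+m)
    have e : n + (m+1) = (n+m)+1 := by omega
    rw [e]; omega

lemma D_pos (k : ℕ) : 0 < D k := pow_pos (by norm_num) _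

lemma D_le (k : ℕ) : D k ≤ (1/2 : ℝ) ^ (k+1) := by
  apply pow_le_pow_of_le_one (by norm_num) (by norm_num) (E_ge k)

lemma D_add_le (n m : ℕ) : D (n + m) ≤ D n * (1/2 : ℝ) ^ m := by
  rw [D, D, ← pow_add]
  apply pow_le_pow_of_le_one (by norm_num) (by norm_num) (E_add_le n m)

lemma D_le' (k : ℕ) : D k ≤ (1/2 : ℝ) ^ k :=
  le_trans (D_le k) (pow_le_pow_of_le_one (by norm_num) (by norm_num) (by omega))

lemma summable_geom_half : Summable (fun k : ℕ => (1/2 : ℝ) ^ k) :=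
  summable_geometric_of_lt_one (by norm_num) (by norm_num)

lemma summable_D_half : Summable (fun k => D k / 2) := by
  apply Summable.of_nonneg_of_le (fun k => div_nonneg (D_pos k).le (by norm_num)) (fun k => ?_)
    (summable_geom_half.div_const 2)
  have h := D_le' k
  linarith

lemma tsum_D_tail (n : ℕ) : (∑' m : ℕ, D (n + m) / 2) ≤ D n := by
  have h1 : ∀ m : ℕ, D (n + m) / 2 ≤ (D n / 2) * (1/2 : ℝ)^m := by
    intro m
    have := D_add_le n m
    linarith
  have hgs : Summable (fun m : ℕ => (D n / 2) * (1/2 : ℝ)^m) := summable_geom_half.mul_left _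
  have h2 : Summable (fun m => D (n + m) / 2) :=
    Summable.of_nonneg_of_le (fun m => div_nonneg (D_pos _).le (by norm_num)) h1 hgs
  calc (∑' m : ℕ, D (n + m) / 2) ≤ ∑' m : ℕ, (D n / 2) * (1/2 : ℝ)^m :=
        Summable.tsum_le_tsum h1 h2 hgs
    _ = (D n / 2) * (1 - 1/2)⁻¹ := by
        rw [tsum_mul_left, tsum_geometric_of_lt_one (by norm_num) (by norm_num)]
    _ = D n := by norm_num

/-- near a lattice point of `c•ℤ` within `ε`. -/
def nearL (c ε x : ℝ) : Prop := ∃ m : ℤ, |x - m * c| ≤ ε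

lemma round_min {c : ℝ} (hc : 0 < c) (x : ℝ) (m : ℤ) :
    |x - (round (x/c) : ℤ) * c| ≤ |x - m * c| := by
  have hc' : c ≠ 0 := ne_of_gt hc
  have key : |x/c - (round (x/c) : ℤ)| ≤ |x/c - (m : ℝ)| := by
    rcases eq_or_ne m (round (x/c)) with rfl | hne
    · exact le_refl _
    · have h1 : |x/c - (round (x/c) : ℝ)| ≤ 1/2 := abs_sub_round _
      have h2 : (1:ℝ) ≤ |((round (x/c) : ℝ)) - (m:ℝ)| := by
        have hne' : round (x/c) - m ≠ 0 := sub_ne_zero.mpr (Ne.symm hne)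
        have := Int.one_le_abs hne'
        calc (1:ℝ) = ((1:ℤ):ℝ) := by norm_num
          _ ≤ ((|round (x/c) - m| : ℤ) : ℝ) := by exact_mod_cast this
          _ = |((round (x/c) : ℝ)) - (m:ℝ)| := by push_cast; ring_nf
      have h3 : |(round (x/c) : ℝ) - m| ≤ |(round (x/c) : ℝ) - x/c| + |x/c - m| :=
        abs_sub_le _ _ _
      have h4 : |(round (x/c) : ℝ) - x/c| = |x/c - (round (x/c) : ℝ)| := abs_sub_comm _ _
      linarith
  have e : ∀ r : ℝ, x - r * c = (x/c - r) * c := fun r => by field_simp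
  rw [e, e, abs_mul, abs_mul, abs_of_pos hc]
  exact mul_le_mul_of_nonneg_right key hc.le

lemma isClosed_nearL {c ε : ℝ} (hc : 0 < c) : IsClosed {x : ℝ | nearL c ε x} := by
  rw [← isOpen_compl_iff, Metric.isOpen_iff]
  intro x hx
  simp only [mem_compl_iff, mem_setOf_eq, nearL, not_exists, not_le] at hx
  set r := |x - (round (x/c) : ℤ) * c| with hr
  refine ⟨r - ε, by have := hx (round (x/c)); linarith, ?_⟩
  intro y hy
  simp only [Metric.mem_ball, Real.dist_eq] at hy
  simp only [mem_compl_iff, mem_setOf_eq, nearL, not_exists, not_le]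
  intro m
  have h1 : r ≤ |x - m * c| := round_min hc x m
  have h2 : |x - m*c| ≤ |x - y| + |y - m*c| := abs_sub_le _ _ _
  have h3 : |x - y| = |y - x| := abs_sub_comm _ _
  linarith

def near2 (c ε : ℝ) (q : ℝ × ℝ) : Prop := nearL c ε q.1 ∧ nearL c ε q.2

def Q (i : ℕ) : Set (ℝ × ℝ) := {q | ∀ n : ℕ, near2 (D (4*n+i)) (D (4*n+i+1)) q}

lemma isClosed_Q (i : ℕ) : IsClosed (Q i) := by
  have : Q i = ⋂ n : ℕ, ((fun q : ℝ × ℝ => q.1) ⁻¹' {x | nearL (D (4*n+i)) (D (4*n+i+1)) x} ∩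
      (fun q : ℝ × ℝ => q.2) ⁻¹' {x | nearL (D (4*n+i)) (D (4*n+i+1)) x}) := by
    ext q; simp [Q, near2, Set.mem_iInter, Set.mem_setOf_eq, forall_and]
  rw [this]
  exact isClosed_iInter fun n => ((isClosed_nearL (D_pos _)).preimage continuous_fst).inter
    ((isClosed_nearL (D_pos _)).preimage continuous_snd)

def B : Set (ℝ × ℝ) := Q 0 ∪ Q 1 ∪ Q 2 ∪ Q 3

lemma isClosed_B : IsClosed B :=
  (((isClosed_Q 0).union (isClosed_Q 1)).union (isClosed_Q 2)).union (isClosed_Q 3)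

lemma two_mul_D_succ (k : ℕ) : 2 * D (k+1) = (1/2 : ℝ) ^ (E (k+1) - 1) := by
  obtain ⟨m, hm⟩ : ∃ m, E (k+1) = m + 1 := ⟨E (k+1) - 1, by have := E_pos (k+1); omega⟩
  rw [D, hm]
  simp only [Nat.add_sub_cancel, pow_succ]
  ring

lemma nat_le_two_pow (N : ℕ) : ((N:ℝ) + 1) ≤ 2 ^ N := by
  have h : N < 2 ^ N := N.lt_two_pow_self
  have h2 : N + 1 ≤ 2 ^ N := h
  exact_mod_cast h2

lemma event_bound (i N : ℕ) (d : ℝ≥0) (hd : 0 < d) :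
    ∀ᶠ n : ℕ in atTop,
      (3 * ((N:ℝ) + 1) * 2 ^ E (4*n+i)) ^ 2 * (2 * D (4*n+i+1)) ^ (d:ℝ) ≤ 1 := by
  set d' : ℝ := (d : ℝ) with hd'def
  have hd'0 : 0 < d' := hd
  obtain ⟨n₀, hn₀⟩ := exists_nat_ge (max ((2*(N:ℝ)+7)/d') d')
  rw [eventually_atTop]
  refine ⟨n₀, fun n hn => ?_⟩
  set k := 4*n+i with hk
  have hEk1 : (1:ℝ) ≤ (E k : ℝ) := by exact_mod_cast E_pos k
  have hkn : (n₀ : ℝ) ≤ (k:ℝ) + 1 := by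
    have : n₀ ≤ k + 1 := by omega
    exact_mod_cast this
  have hEkk : ((k:ℝ) + 1) ≤ (E k : ℝ) := by exact_mod_cast E_ge k
  have hA : 2*(N:ℝ)+7 ≤ d' * ((k:ℝ)+2) := by
    have h1 : (2*(N:ℝ)+7)/d' ≤ (n₀ : ℝ) := le_trans (le_max_left _ _) hn₀
    have h2 : (2*(N:ℝ)+7)/d' ≤ (k:ℝ)+2 := by linarith
    rw [div_le_iff₀ hd'0] at h2
    linarith [h2]
  have hB : d' ≤ (E k : ℝ) := by
    have h1 : d' ≤ (n₀:ℝ) := le_trans (le_max_right _ _) hn₀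
    linarith
  obtain ⟨m, hm⟩ : ∃ m, E (k+1) = m + 1 := ⟨E (k+1) - 1, by have := E_pos (k+1); omega⟩
  have hmval : (m : ℝ) = ((k:ℝ)+2) * (E k : ℝ) - 1 := by
    have h1 : (k+2) * E k = m + 1 := by rw [← E_succ k, hm]
    have : ((k:ℝ)+2) * (E k : ℝ) = (m:ℝ) + 1 := by exact_mod_cast h1
    linarith
  have hexp : ((N*2+4+E k*2 : ℕ) : ℝ) ≤ (m:ℝ) * d' := by
    push_cast
    rw [hmval]
    have hh1 : (2*(N:ℝ)+7) * (E k:ℝ) ≤ (d' * ((k:ℝ)+2)) * (E k:ℝ) :=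
      mul_le_mul_of_nonneg_right hA (by linarith)
    have hh2 : (2*(N:ℝ)+4) * 1 ≤ (2*(N:ℝ)+4) * (E k:ℝ) :=
      mul_le_mul_of_nonneg_left hEk1 (by positivity)
    nlinarith [hh1, hh2, hB, hEk1]
  have step1 : (2 * D (k+1)) ^ d' = ((2:ℝ) ^ ((m:ℝ) * d'))⁻¹ := by
    rw [two_mul_D_succ k, hm]
    simp only [Nat.add_sub_cancel]
    rw [← Real.rpow_natCast (1/2 : ℝ) m, ← Real.rpow_mul (by norm_num : (0:ℝ) ≤ 1/2)]
    rw [show (1/2 : ℝ) = 2⁻¹ by norm_num, Real.inv_rpow (by norm_num : (0:ℝ) ≤ 2)]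
  have step2 : (3 * ((N:ℝ) + 1) * 2 ^ E k) ^ 2 ≤ (2:ℝ) ^ (N*2+4+E k*2) := by
    have h2 : ((N:ℝ)+1) ≤ 2^N := nat_le_two_pow N
    have hp1 : (0:ℝ) < 2 ^ E k := by positivity
    have hp2 : (0:ℝ) < 2 ^ N := by positivity
    calc (3 * ((N:ℝ) + 1) * 2 ^ E k) ^ 2 = 9 * ((N:ℝ)+1)^2 * (2 ^ E k)^2 := by ring
      _ ≤ 9 * ((2:ℝ)^N)^2 * (2 ^ E k)^2 := by
          have h3 : ((N:ℝ)+1)^2 ≤ ((2:ℝ)^N)^2 := by nlinarith [h2]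
          nlinarith [h3, hp1]
      _ ≤ 16 * ((2:ℝ)^N)^2 * (2 ^ E k)^2 := by nlinarith [hp1, hp2]
      _ = 2 ^ (N*2+4+E k*2) := by
          rw [pow_add, pow_add, pow_mul, pow_mul]
          ring
  have step3 : (2:ℝ) ^ (N*2+4+E k*2) ≤ (2:ℝ) ^ ((m:ℝ) * d') := by
    rw [← Real.rpow_natCast 2 (N*2+4+E k*2)]
    exact Real.rpow_le_rpow_of_exponent_le one_le_two hexp
  have hpos : (0:ℝ) < (2:ℝ) ^ ((m:ℝ) * d') := Real.rpow_pos_of_pos (by norm_num) _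
  calc (3 * ((N:ℝ) + 1) * 2 ^ E k) ^ 2 * (2 * D (k+1)) ^ d'
      ≤ (2:ℝ) ^ ((m:ℝ)*d') * (2 * D (k+1)) ^ d' := by
        apply mul_le_mul_of_nonneg_right (le_trans step2 step3)
        have h2D : (0:ℝ) < 2 * D (k+1) := by have := D_pos (k+1); linarith
        positivity
    _ = 1 := by rw [step1, mul_inv_cancel₀ (ne_of_gt hpos)]

lemma diam_sq_le (a b ε : ℝ) (hε : 0 ≤ ε) :
    EMetric.diam (Icc (a - ε) (a + ε) ×ˢ Icc (b - ε) (b + ε)) ≤ ENNReal.ofReal (2*ε) := by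
  apply EMetric.diam_le
  rintro x hx y hy
  rw [Set.mem_prod] at hx hy
  obtain ⟨hx1, hx2⟩ := hx
  obtain ⟨hy1, hy2⟩ := hy
  rw [mem_Icc] at hx1 hx2 hy1 hy2
  rw [Prod.edist_eq]
  apply max_le
  · rw [edist_dist]
    apply ENNReal.ofReal_le_ofReal
    rw [Real.dist_eq, abs_le]
    constructor <;> linarith [hx1.1, hx1.2, hy1.1, hy1.2]
  · rw [edist_dist]
    apply ENNReal.ofReal_le_ofReal
    rw [Real.dist_eq, abs_le]
    constructor <;> linarith [hx2.1, hx2.2, hy2.1, hy2.2]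

set_option maxHeartbeats 1000000 in
lemma dimH_Q_ball (i N : ℕ) (d : ℝ≥0) (hd : 0 < d) :
    dimH (Q i ∩ Metric.closedBall 0 N) ≤ (d : ℝ≥0∞) := by
  apply dimH_le_of_hausdorffMeasure_ne_top
  set M : ℕ → ℤ := fun n => ((N:ℤ)+1) * 2^(E (4*n+i)) with hM
  have hM1 : ∀ n, 1 ≤ M n := by
    intro n
    have h1 : (1:ℤ) ≤ 2^(E (4*n+i)) := by exact_mod_cast Nat.one_le_two_pow (n := E (4*n+i))
    have h2 : (1:ℤ) ≤ (N:ℤ)+1 := by omega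
    calc (1:ℤ) = 1*1 := by ring
      _ ≤ ((N:ℤ)+1) * 2^(E (4*n+i)) := mul_le_mul h2 h1 (by norm_num) (by positivity)
  set c : ℕ → ℝ := fun n => D (4*n+i) with hc
  set ε : ℕ → ℝ := fun n => D (4*n+i+1) with hε
  have hεpos : ∀ n, 0 < ε n := fun n => D_pos _
  have hcpos : ∀ n, 0 < c n := fun n => D_pos _
  set t : ∀ _ : ℕ, (↥(Finset.Icc (-(M _)) (M _)) × ↥(Finset.Icc (-(M _)) (M _))) → Set (ℝ×ℝ) :=
    fun n z => Icc (((z.1 : ℤ) : ℝ) * c n - ε n) (((z.1 : ℤ) : ℝ) * c n + ε n) ×ˢ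
      Icc (((z.2 : ℤ) : ℝ) * c n - ε n) (((z.2 : ℤ) : ℝ) * c n + ε n) with ht
  have hr : Tendsto (fun n => ENNReal.ofReal (2 * ε n)) atTop (nhds 0) := by
    have h0 : Tendsto (fun n : ℕ => 2 * ε n) atTop (nhds 0) := by
      apply squeeze_zero (fun n => by have := hεpos n; linarith) (g := fun n => 2 * (1/2:ℝ)^n)
      · intro n
        have h1 : ε n ≤ (1/2:ℝ)^(4*n+i+1) := D_le' _
        have h2 : ((1:ℝ)/2)^(4*n+i+1) ≤ (1/2:ℝ)^n :=
          pow_le_pow_of_le_one (by norm_num) (by norm_num) (by omega)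
        linarith
      · have := (tendsto_pow_atTop_nhds_zero_of_lt_one
          (by norm_num : (0:ℝ) ≤ 1/2) (by norm_num : (1/2:ℝ) < 1)).const_mul (2:ℝ)
        simpa using this
    have h1 := ENNReal.tendsto_ofReal h0
    simpa using h1
  have htdiam : ∀ n (z : ↥(Finset.Icc (-(M n)) (M n)) × ↥(Finset.Icc (-(M n)) (M n))),
      EMetric.diam (t n z) ≤ ENNReal.ofReal (2 * ε n) :=
    fun n z => diam_sq_le _ _ _ (hεpos n).le
  have hst : ∀ n, Q i ∩ Metric.closedBall 0 N ⊆ ⋃ z, t n z := by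
    intro n q hq
    obtain ⟨⟨m1, h1⟩, ⟨m2, h2⟩⟩ := hq.1 n
    have hqball := hq.2
    rw [Metric.mem_closedBall] at hqball
    have hq1 : |q.1| ≤ N := by
      have h' : dist q.1 (0:ℝ×ℝ).1 ≤ dist q 0 := by
        rw [Prod.dist_eq]; exact le_max_left _ _
      simpa [Real.dist_eq] using le_trans h' hqball
    have hq2 : |q.2| ≤ N := by
      have h' : dist q.2 (0:ℝ×ℝ).2 ≤ dist q 0 := by
        rw [Prod.dist_eq]; exact le_max_right _ _
      simpa [Real.dist_eq] using le_trans h' hqball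
    have hεle : ε n ≤ 1 := by
      have := D_le' (4*n+i+1)
      have h2 : ((1:ℝ)/2)^(4*n+i+1) ≤ 1 := pow_le_one₀ (by norm_num) (by norm_num)
      linarith
    have hcM : c n * 2^(E (4*n+i)) = 1 := by
      rw [hc]
      show D (4*n+i) * 2^(E (4*n+i)) = 1
      rw [D, ← mul_pow]
      norm_num
    have hmem : ∀ (mm : ℤ) (x : ℝ), |x| ≤ N → |x - mm * c n| ≤ ε n →
        mm ∈ Finset.Icc (-(M n)) (M n) := by
      intro mm x hx hnear
      have hb : |(mm:ℝ)| * c n ≤ (N:ℝ) + 1 := by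
        have h4 : x - (x - mm * c n) = mm * c n := by ring
        have h3 : |(mm:ℝ) * c n| ≤ |x| + |x - mm * c n| := by
          calc |(mm:ℝ) * c n| = |x - (x - mm*c n)| := by rw [h4]
            _ ≤ |x| + |x - mm*c n| := abs_sub _ _
        rw [abs_mul, abs_of_pos (hcpos n)] at h3
        calc |(mm:ℝ)| * c n ≤ |x| + |x - mm * c n| := h3
          _ ≤ (N:ℝ) + 1 := by linarith [hnear, hx, hεle]
      have hb2 : |(mm:ℝ)| ≤ ((N:ℝ)+1) * 2^(E (4*n+i)) := by
        have h5 := mul_le_mul_of_nonneg_right hb (by positivity : (0:ℝ) ≤ 2^(E (4*n+i)))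
        rw [mul_assoc, hcM, mul_one] at h5
        exact h5
      have hb3 : |mm| ≤ M n := by
        have h6 : ((|mm| : ℤ) : ℝ) ≤ ((M n : ℤ) : ℝ) := by
          rw [Int.cast_abs, hM]
          push_cast
          exact_mod_cast hb2
        exact_mod_cast h6
      rw [Finset.mem_Icc]
      constructor
      · linarith [neg_abs_le mm, hb3]
      · linarith [le_abs_self mm, hb3]
    refine mem_iUnion.mpr ⟨⟨⟨m1, hmem m1 q.1 hq1 h1⟩, ⟨m2, hmem m2 q.2 hq2 h2⟩⟩, ?_⟩
    refine ⟨?_, ?_⟩ <;> rw [mem_Icc]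
    · have h7 := abs_le.mp h1
      constructor <;> linarith [h7.1, h7.2]
    · have h7 := abs_le.mp h2
      constructor <;> linarith [h7.1, h7.2]
  have hmeas := MeasureTheory.Measure.hausdorffMeasure_le_liminf_sum (d:ℝ) (Q i ∩ Metric.closedBall 0 N)
    (fun n => ENNReal.ofReal (2 * ε n)) hr t
    (Eventually.of_forall htdiam) (Eventually.of_forall hst)
  have hev : ∀ᶠ n in atTop,
      (∑ z : ↥(Finset.Icc (-(M n)) (M n)) × ↥(Finset.Icc (-(M n)) (M n)),
        EMetric.diam (t n z) ^ (d:ℝ)) ≤ 1 := by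
    filter_upwards [event_bound i N d hd] with n hn
    set C : ℕ := (Finset.Icc (-(M n)) (M n)).card with hC
    have hcard : Fintype.card (↥(Finset.Icc (-(M n)) (M n)) × ↥(Finset.Icc (-(M n)) (M n)))
        = C * C := by
      rw [Fintype.card_prod, Fintype.card_coe]
    have hCle : (C:ℝ) ≤ 3 * ((N:ℝ)+1) * 2^(E (4*n+i)) := by
      have h1 : C = (2 * M n + 1).toNat := by
        rw [hC, Int.card_Icc]
        congr 1
        ring
      have h2 : ((C:ℤ):ℝ) = 2*((M n : ℤ):ℝ) + 1 := by
        rw [h1, Int.toNat_of_nonneg (by linarith [hM1 n])]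
        push_cast
        ring
      have h3 : ((M n : ℤ):ℝ) = ((N:ℝ)+1) * 2^(E (4*n+i)) := by
        rw [hM]; push_cast; ring
      have h4 : (1:ℝ) ≤ ((N:ℝ)+1) * 2^(E (4*n+i)) := by
        have h40 := hM1 n
        calc (1:ℝ) = ((1:ℤ):ℝ) := by norm_num
          _ ≤ ((M n : ℤ):ℝ) := by exact_mod_cast h40
          _ = _ := h3
      have h5 : (C:ℝ) = ((C:ℤ):ℝ) := by push_cast; ring
      rw [h5, h2, h3]
      linarith
    have hsum : (∑ z : ↥(Finset.Icc (-(M n)) (M n)) × ↥(Finset.Icc (-(M n)) (M n)),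
        EMetric.diam (t n z) ^ (d:ℝ)) ≤ (C * C) • (ENNReal.ofReal (2 * ε n)) ^ (d:ℝ) := by
      have h8 := Finset.sum_le_card_nsmul Finset.univ
        (fun z => EMetric.diam (t n z) ^ (d:ℝ)) ((ENNReal.ofReal (2 * ε n)) ^ (d:ℝ))
        (fun z _ => ENNReal.rpow_le_rpow (htdiam n z) (by positivity))
      simpa [Finset.card_univ, hcard] using h8
    refine le_trans hsum ?_
    have h2ε : (0:ℝ) < 2 * ε n := by have := hεpos n; linarith
    rw [nsmul_eq_mul, ENNReal.ofReal_rpow_of_pos h2ε]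
    rw [show ((C*C : ℕ) : ℝ≥0∞) = ENNReal.ofReal ((C*C : ℕ) : ℝ) by
      rw [ENNReal.ofReal_natCast]]
    have hCC0 : (0:ℝ) ≤ ((C*C : ℕ):ℝ) := Nat.cast_nonneg _
    rw [← ENNReal.ofReal_mul hCC0]
    rw [show (1 : ℝ≥0∞) = ENNReal.ofReal 1 by simp]
    apply ENNReal.ofReal_le_ofReal
    have hCC : ((C*C : ℕ) : ℝ) ≤ (3 * ((N:ℝ)+1) * 2^(E (4*n+i)))^2 := by
      push_cast
      have hC0 : (0:ℝ) ≤ (C:ℝ) := Nat.cast_nonneg _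
      nlinarith [hCle, hC0]
    have hrp : (0:ℝ) ≤ (2 * ε n) ^ (d:ℝ) := Real.rpow_nonneg (by linarith) _
    calc ((C*C : ℕ) : ℝ) * (2 * ε n) ^ (d:ℝ)
        ≤ (3 * ((N:ℝ)+1) * 2^(E (4*n+i)))^2 * (2 * ε n) ^ (d:ℝ) :=
          mul_le_mul_of_nonneg_right hCC hrp
      _ ≤ 1 := hn
  have hliminf : liminf (fun n => ∑ z : ↥(Finset.Icc (-(M n)) (M n)) ×
      ↥(Finset.Icc (-(M n)) (M n)), EMetric.diam (t n z) ^ (d:ℝ)) atTop ≤ 1 :=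
    liminf_le_of_frequently_le hev.frequently
  exact ne_of_lt (lt_of_le_of_lt (le_trans hmeas hliminf) ENNReal.one_lt_top)

lemma dimH_Q (i : ℕ) : dimH (Q i) = 0 := by
  refine le_antisymm ?_ (zero_le)
  have hcover : Q i = ⋃ N : ℕ, (Q i ∩ Metric.closedBall 0 N) := by
    ext q
    simp only [mem_iUnion, mem_inter_iff]
    constructor
    · intro hq
      obtain ⟨N, hN⟩ := exists_nat_ge (dist q 0)
      exact ⟨N, hq, Metric.mem_closedBall.mpr hN⟩
    · rintro ⟨N, hq, -⟩; exact hq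
  rw [hcover, dimH_iUnion]
  apply iSup_le
  intro N
  refine ENNReal.le_of_forall_pos_le_add fun ε hε _ => ?_
  simpa using dimH_Q_ball i N ε hε

lemma dimH_B : dimH B = 0 := by
  rw [B, dimH_union, dimH_union, dimH_union, dimH_Q, dimH_Q, dimH_Q, dimH_Q]
  simp

/-! ### The greedy construction -/

def rot (u : ℝ × ℝ) : ℝ × ℝ := (-u.2, u.1)

def dir (k : ℕ) (v : ℝ × ℝ) : ℝ × ℝ :=
  if k % 4 = 0 then v else if k % 4 = 1 then -v else if k % 4 = 2 then rot v else -rot v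

def invdir (k : ℕ) (z : ℝ × ℝ) : ℝ × ℝ :=
  if k % 4 = 0 then z else if k % 4 = 1 then -z else if k % 4 = 2 then (z.2, -z.1)
    else (-z.2, z.1)

lemma dir_add (k : ℕ) (u z : ℝ × ℝ) : dir k (u + z) = dir k u + dir k z := by
  unfold dir
  split_ifs <;> simp [rot, Prod.ext_iff] <;> ring_nf <;> simp

lemma dir_invdir (k : ℕ) (z : ℝ × ℝ) : dir k (invdir k z) = z := by
  unfold dir invdir
  split_ifs <;> simp [rot, Prod.ext_iff]

lemma dist_dir (k : ℕ) (u u' : ℝ × ℝ) : dist (dir k u) (dir k u') = dist u u' := by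
  have hrot : ∀ a b : ℝ × ℝ, dist (rot a) (rot b) = dist a b := by
    intro a b
    simp only [rot, Prod.dist_eq, Real.dist_eq]
    rw [max_comm]
    congr 1
    rw [← neg_sub, abs_neg]
    ring_nf
  have hneg : ∀ a b : ℝ × ℝ, dist (-a) (-b) = dist a b := fun a b => dist_neg_neg a b
  unfold dir
  split_ifs <;> simp [hrot, hneg]

/-- Round a point to the lattice `(D k • ℤ)²`. -/
def lat (k : ℕ) (x : ℝ × ℝ) : ℝ × ℝ :=
  ((round (x.1 / D k) : ℤ) * D k, (round (x.2 / D k) : ℤ) * D k)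

lemma abs_round_mul_le (c : ℝ) (hc : 0 < c) (x : ℝ) : |(round (x/c) : ℤ) * c - x| ≤ c / 2 := by
  have h := abs_sub_round (x/c)
  have e : (round (x/c) : ℝ) * c - x = ((round (x/c) : ℝ) - x/c) * c := by
    field_simp
  rw [e, abs_mul, abs_of_pos hc, abs_sub_comm]
  calc |x/c - (round (x/c) : ℝ)| * c ≤ (1/2) * c :=
        mul_le_mul_of_nonneg_right h hc.le
    _ = c / 2 := by ring

lemma dist_lat (k : ℕ) (x : ℝ × ℝ) : dist (lat k x) x ≤ D k / 2 := by
  rw [Prod.dist_eq]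
  apply max_le <;>
  · simp only [lat, Real.dist_eq]
    exact abs_round_mul_le _ (D_pos k) _

def wseq (p : ℝ × ℝ) : ℕ → ℝ × ℝ
  | 0 => (1, 0)
  | k+1 => wseq p k + invdir k (lat k (p + dir k (wseq p k)) - (p + dir k (wseq p k)))

lemma wseq_step (p : ℝ × ℝ) (k : ℕ) :
    dist (wseq p k) (wseq p (k+1)) ≤ D k / 2 := by
  show dist (wseq p k) (wseq p k + invdir k _) ≤ D k / 2
  rw [← dist_dir k, dir_add, dir_invdir, dist_self_add_right, ← dist_eq_norm]
  exact dist_lat k _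

lemma wseq_exact (p : ℝ × ℝ) (k : ℕ) :
    p + dir k (wseq p (k+1)) = lat k (p + dir k (wseq p k)) := by
  show p + dir k (wseq p k + invdir k _) = _
  rw [dir_add, dir_invdir]
  abel

lemma wseq_cauchy (p : ℝ × ℝ) : CauchySeq (wseq p) := by
  apply cauchySeq_of_le_geometric (1/2 : ℝ) (1/2 : ℝ) (by norm_num)
  intro n
  calc dist (wseq p n) (wseq p (n+1)) ≤ D n / 2 := wseq_step p n
    _ ≤ (1/2 : ℝ)^n / 2 := by have := D_le' n; linarith
    _ ≤ 1/2 * (1/2:ℝ)^n := le_of_eq (by ring)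

lemma exists_v (p : ℝ × ℝ) : ∃ v : ℝ × ℝ, v ≠ 0 ∧
    p + v ∈ B ∧ p - v ∈ B ∧ p + (-v.2, v.1) ∈ B ∧ p - (-v.2, v.1) ∈ B := by
  obtain ⟨v, hv⟩ := cauchySeq_tendsto_of_complete (wseq_cauchy p)
  have hdist : ∀ n : ℕ, dist (wseq p n) v ≤ D n := by
    intro n
    calc dist (wseq p n) v ≤ ∑' m, D (n + m) / 2 :=
          dist_le_tsum_of_dist_le_of_tendsto (fun k => D k / 2) (fun k => wseq_step p k)
            summable_D_half hv n
      _ ≤ D n := tsum_D_tail n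
  have key : ∀ k : ℕ, near2 (D k) (D (k+1)) (p + dir k v) := by
    intro k
    have hex := wseq_exact p k
    have hd : dist (p + dir k v) (p + dir k (wseq p (k+1))) ≤ D (k+1) := by
      rw [dist_add_left, dist_dir, dist_comm]
      exact hdist (k+1)
    have hco1 : dist (p + dir k v).1 (p + dir k (wseq p (k+1))).1 ≤ D (k+1) := by
      refine le_trans ?_ hd
      rw [Prod.dist_eq]; exact le_max_left _ _
    have hco2 : dist (p + dir k v).2 (p + dir k (wseq p (k+1))).2 ≤ D (k+1) := by
      refine le_trans ?_ hd
      rw [Prod.dist_eq]; exact le_max_right _ _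
    constructor
    · refine ⟨round ((p + dir k (wseq p k)).1 / D k), ?_⟩
      have h1 : (p + dir k (wseq p (k+1))).1
          = (round ((p + dir k (wseq p k)).1 / D k) : ℤ) * D k := by
        rw [hex]; rfl
      rw [← h1, ← Real.dist_eq]
      exact hco1
    · refine ⟨round ((p + dir k (wseq p k)).2 / D k), ?_⟩
      have h2 : (p + dir k (wseq p (k+1))).2
          = (round ((p + dir k (wseq p k)).2 / D k) : ℤ) * D k := by
        rw [hex]; rfl
      rw [← h2, ← Real.dist_eq]
      exact hco2
  have hD0 : D 0 = 1/2 := by norm_num [D, E, Nat.factorial]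
  have hvne : v ≠ 0 := by
    intro h
    have h0 := hdist 0
    rw [h, hD0] at h0
    have he : dist (wseq p 0) (0 : ℝ × ℝ) = 1 := by
      show dist ((1:ℝ), (0:ℝ)) (0 : ℝ × ℝ) = 1
      have : (0 : ℝ × ℝ) = ((0:ℝ), (0:ℝ)) := rfl
      rw [this, Prod.dist_eq]
      simp [Real.dist_eq]
    rw [he] at h0
    norm_num at h0
  have m0 : p + v ∈ Q 0 := by
    simp only [Q, mem_setOf_eq]
    intro n
    have hk : (4*n+0) % 4 = 0 := by omega
    have hh := key (4*n+0)
    rwa [show dir (4*n+0) v = v from by unfold dir; rw [if_pos hk]] at hh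
  have m1 : p - v ∈ Q 1 := by
    simp only [Q, mem_setOf_eq]
    intro n
    have hh := key (4*n+1)
    rw [show dir (4*n+1) v = -v from by
      unfold dir; rw [if_neg (by omega), if_pos (by omega)]] at hh
    rwa [← sub_eq_add_neg] at hh
  have m2 : p + (-v.2, v.1) ∈ Q 2 := by
    simp only [Q, mem_setOf_eq]
    intro n
    have hh := key (4*n+2)
    rwa [show dir (4*n+2) v = (-v.2, v.1) from by
      unfold dir; rw [if_neg (by omega), if_neg (by omega), if_pos (by omega)]; rfl] at hh
  have m3 : p - (-v.2, v.1) ∈ Q 3 := by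
    simp only [Q, mem_setOf_eq]
    intro n
    have hh := key (4*n+3)
    rw [show dir (4*n+3) v = -(-v.2, v.1) from by
      unfold dir; rw [if_neg (by omega), if_neg (by omega), if_neg (by omega)]; rfl] at hh
    rwa [← sub_eq_add_neg] at hh
  exact ⟨v, hvne, Or.inl (Or.inl (Or.inl m0)), Or.inl (Or.inl (Or.inr m1)),
    Or.inl (Or.inr m2), Or.inr m3⟩

end Sq

end

theorem stmt11 : ∃ B : Set (ℝ × ℝ), IsClosed B ∧ dimH B = 0 ∧
    ∀ p : ℝ × ℝ, ∃ v : ℝ × ℝ, v ≠ 0 ∧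
      p + v ∈ B ∧ p - v ∈ B ∧ p + (-v.2, v.1) ∈ B ∧ p - (-v.2, v.1) ∈ B := by
  exact ⟨Sq.B, Sq.isClosed_B, Sq.dimH_B, Sq.exists_v⟩
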